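/- Corollary for Lipschitz components: let (H,d) be a locally compact Hadamard space and f₁,…,f_N : H → ℝ convex functions that are Lipschitz on H with a common constant L > 0, and suppose f = Σₙ fₙ attains its minimum. Let (λ_k)_{k∈ℕ₀} be positive reals with Σ_k λ_k = ∞ and Σ_k λ_k² < ∞, let x₀ ∈ H, and for each k ∈ ℕ₀ and n = 1,…,N let x_{kN+n} be the minimizer of z ↦ fₙ(z) + (1/(2λ_k))·d(x_{kN+n−1},z)². Then the sequence (x_j)_{j∈ℕ₀} converges to a minimizer of f. -/

import Mathlib

open Filter Topology Metric

/-- A Hadamard space structure on a metric space `H`: a geodesic combination map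
`geo x y t = (1-t)x ⊕ ty` satisfying the geodesic axioms and the CAT(0) inequality.
(Completeness is imposed via the `CompleteSpace` instance in the theorems.) -/
structure Hadamard (H : Type*) [MetricSpace H] : Type _ where
  geo : H → H → ℝ → H
  geo_zero : ∀ x y : H, geo x y 0 = x
  geo_one : ∀ x y : H, geo x y 1 = y
  geo_dist : ∀ x y : H, ∀ s ∈ Set.Icc (0 : ℝ) 1, ∀ t ∈ Set.Icc (0 : ℝ) 1,
    dist (geo x y s) (geo x y t) = |s - t| * dist x y
  cat0 : ∀ z x y : H, ∀ t ∈ Set.Icc (0 : ℝ) 1,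
    dist z (geo x y t) ^ 2
      ≤ (1 - t) * dist z x ^ 2 + t * dist z y ^ 2 - t * (1 - t) * dist x y ^ 2

/-- A function `f : H → (-∞,∞]` is (geodesically) convex if along every geodesic
`t ↦ (1-t)x ⊕ ty` it satisfies the convexity inequality. -/
def GeoConvex {H : Type*} [MetricSpace H] (G : Hadamard H) (f : H → EReal) : Prop :=
  ∀ x y : H, ∀ t ∈ Set.Icc (0 : ℝ) 1,
    f (G.geo x y t) ≤ ((1 - t : ℝ) : EReal) * f x + ((t : ℝ) : EReal) * f y

/-- A real-valued function `f : H → ℝ` is (geodesically) convex if along every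
geodesic `t ↦ (1-t)x ⊕ ty` it satisfies the convexity inequality. -/
def GeoConvexReal {H : Type*} [MetricSpace H] (G : Hadamard H) (f : H → ℝ) : Prop :=
  ∀ x y : H, ∀ t ∈ Set.Icc (0 : ℝ) 1,
    f (G.geo x y t) ≤ (1 - t) * f x + t * f y

lemma Hadamard.dist_geo {H : Type*} [MetricSpace H] (G : Hadamard H) (x y : H)
    {t : ℝ} (ht : t ∈ Set.Icc (0:ℝ) 1) :
    dist x (G.geo x y t) = t * dist x y ∧ dist (G.geo x y t) y = (1 - t) * dist x y := by
  have h0 : (0:ℝ) ∈ Set.Icc (0:ℝ) 1 := by constructor <;> norm_num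
  have h1 : (1:ℝ) ∈ Set.Icc (0:ℝ) 1 := by constructor <;> norm_num
  have ha := G.geo_dist x y 0 h0 t ht
  have hb := G.geo_dist x y t ht 1 h1
  rw [G.geo_zero] at ha
  rw [G.geo_one] at hb
  obtain ⟨ht0, ht1⟩ := ht
  constructor
  · rw [ha, abs_of_nonpos (by linarith), neg_sub, sub_zero]
  · rw [hb, abs_of_nonpos (by linarith), neg_sub]

/-- key geodesic interpolation: every point of a big ball is close to a smaller ball -/
lemma Hadamard.exists_near {H : Type*} [MetricSpace H] (G : Hadamard H) (x₀ w : H)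
    {r ε : ℝ} (hr : 0 ≤ r) (hε : 0 < ε) (hw : dist x₀ w ≤ r + ε) :
    ∃ u : H, dist x₀ u ≤ r ∧ dist u w ≤ ε := by
  rcases le_or_gt (dist x₀ w) r with h | h
  · exact ⟨w, h, by simp [hε.le]⟩
  · have hd : 0 < dist x₀ w := lt_of_le_of_lt hr h
    set t := r / dist x₀ w with hts
    have ht : t ∈ Set.Icc (0:ℝ) 1 := by
      constructor
      · positivity
      · rw [div_le_one hd]; linarith
    obtain ⟨h1, h2⟩ := G.dist_geo x₀ w ht
    refine ⟨G.geo x₀ w t, ?_, ?_⟩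
    · rw [h1, hts, div_mul_cancel₀ _ hd.ne']
    · rw [dist_comm] at h2 ⊢
      rw [h2, hts, sub_mul, one_mul, div_mul_cancel₀ _ hd.ne']
      linarith

/-- Hopf–Rinow: in a complete locally compact Hadamard space all closed balls are compact. -/
lemma Hadamard.isCompact_closedBall {H : Type*} [MetricSpace H] [CompleteSpace H]
    [LocallyCompactSpace H] (G : Hadamard H) (x₀ : H) (r : ℝ) :
    IsCompact (closedBall x₀ r) := by
  -- expansion step
  have expand : ∀ r : ℝ, 0 ≤ r → IsCompact (closedBall x₀ r) →
      ∃ ε > 0, IsCompact (closedBall x₀ (r + ε)) := by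
    intro r hr hc
    have hloc : ∀ y : H, ∃ ρ > 0, IsCompact (closedBall y ρ) := by
      intro y
      obtain ⟨K, hKc, hK⟩ := exists_compact_mem_nhds y
      obtain ⟨ρ, hρ, hball⟩ := Metric.mem_nhds_iff.1 hK
      refine ⟨ρ/2, by positivity, hKc.of_isClosed_subset isClosed_closedBall ?_⟩
      exact (closedBall_subset_ball (by linarith)).trans hball
    choose ρ hρ hρc using hloc
    have hcov : closedBall x₀ r ⊆ ⋃ y ∈ closedBall x₀ r, ball y (ρ y / 2) := by
      intro y hy
      exact Set.mem_biUnion hy (mem_ball_self (by have := hρ y; positivity))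
    obtain ⟨t, hts, htfin, htcov⟩ := hc.elim_finite_subcover_image
      (fun y _ => isOpen_ball) hcov
    have hx₀ : x₀ ∈ closedBall x₀ r := mem_closedBall_self hr
    have htne : htfin.toFinset.Nonempty := by
      rcases Set.mem_iUnion₂.1 (htcov hx₀) with ⟨y, hy, _⟩
      exact ⟨y, htfin.mem_toFinset.2 hy⟩
    set ε := htfin.toFinset.inf' htne (fun y => ρ y / 2) with hεdef
    have hεpos : 0 < ε := by
      rw [hεdef, Finset.lt_inf'_iff]
      intro y _; have := hρ y; positivity
    refine ⟨ε, hεpos, ?_⟩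
    have hsub : closedBall x₀ (r + ε) ⊆ ⋃ y ∈ htfin.toFinset, closedBall y (ρ y) := by
      intro w hw
      have hw' : dist x₀ w ≤ r + ε := by rw [dist_comm]; exact mem_closedBall.1 hw
      obtain ⟨u, hu1, hu2⟩ := G.exists_near x₀ w hr hεpos hw'
      have hu1' : u ∈ closedBall x₀ r := mem_closedBall.2 (by rw [dist_comm]; exact hu1)
      rcases Set.mem_iUnion₂.1 (htcov hu1') with ⟨y, hy, hyu⟩
      refine Set.mem_biUnion (htfin.mem_toFinset.2 hy) ?_
      have h1 : dist u y < ρ y / 2 := mem_ball.1 hyu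
      have h2 : ε ≤ ρ y / 2 := Finset.inf'_le _ (htfin.mem_toFinset.2 hy)
      have : dist w y ≤ dist w u + dist u y := dist_triangle _ _ _
      rw [dist_comm w u] at this
      exact mem_closedBall.2 (by linarith)
    have hU : IsCompact (⋃ y ∈ htfin.toFinset, closedBall y (ρ y)) :=
      htfin.toFinset.isCompact_biUnion (fun y _ => hρc y)
    exact hU.of_isClosed_subset isClosed_closedBall hsub
  -- the set of good radii
  rcases lt_or_ge r 0 with hr | hr
  · rw [closedBall_eq_empty.2 hr]; exact isCompact_empty
  by_contra hbad
  set T := {s : ℝ | 0 ≤ s ∧ ¬ IsCompact (closedBall x₀ s)} with hT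
  have hTne : T.Nonempty := ⟨r, hr, hbad⟩
  have hTbd : BddBelow T := ⟨0, fun s hs => hs.1⟩
  set R := sInf T with hR
  have hR0 : 0 ≤ R := le_csInf hTne fun s hs => hs.1
  have hsmall : ∀ s : ℝ, 0 ≤ s → s < R → IsCompact (closedBall x₀ s) := by
    intro s hs hsR
    by_contra h
    exact absurd (csInf_le hTbd ⟨hs, h⟩) (not_le.2 hsR)
  -- closedBall x₀ R is compact
  have hRc : IsCompact (closedBall x₀ R) := by
    rcases eq_or_lt_of_le hR0 with h0 | h0
    · rw [← h0, closedBall_zero]; exact isCompact_singleton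
    refine TotallyBounded.isCompact_of_isClosed ?_ isClosed_closedBall
    rw [Metric.totallyBounded_iff]
    intro δ hδ
    set ε := min (δ/2) (R/2) with hε
    have hεpos : 0 < ε := lt_min (by linarith) (by linarith)
    have hεR : ε < R := lt_of_le_of_lt (min_le_right _ _) (by linarith)
    have hcs : IsCompact (closedBall x₀ (R - ε)) :=
      hsmall _ (by linarith) (by linarith)
    obtain ⟨s, hsfin, hscov⟩ := (Metric.totallyBounded_iff.1 hcs.totallyBounded) ε hεpos
    refine ⟨s, hsfin, ?_⟩
    intro w hw
    have hw' : dist x₀ w ≤ (R - ε) + ε := by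
      rw [mem_closedBall] at hw; rw [dist_comm]; linarith
    obtain ⟨u, hu1, hu2⟩ := G.exists_near x₀ w (by linarith) hεpos hw'
    have hu1' : u ∈ closedBall x₀ (R - ε) := mem_closedBall.2 (by rw [dist_comm]; exact hu1)
    rcases Set.mem_iUnion₂.1 (hscov hu1') with ⟨y, hy, hyu⟩
    refine Set.mem_biUnion hy ?_
    have h1 : dist u y < ε := mem_ball.1 hyu
    have : dist w y ≤ dist w u + dist u y := dist_triangle _ _ _
    rw [dist_comm w u] at this
    have hεδ : ε ≤ δ/2 := min_le_left _ _
    exact mem_ball.2 (by linarith)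
  obtain ⟨ε, hεpos, hεc⟩ := expand R hR0 hRc
  -- contradiction: some element of T lies below R + ε
  obtain ⟨s, hsT, hslt⟩ := (Real.lt_sInf_add_pos hTne hεpos)
  rw [← hR] at hslt
  exact hsT.2 (hεc.of_isClosed_subset isClosed_closedBall
    (closedBall_subset_closedBall (by linarith [csInf_le hTbd hsT])))

/-- if A ≤ B + t*C for all small positive t, then A ≤ B -/
lemma le_of_forall_Ioc {A B C : ℝ} (hC : 0 ≤ C)
    (h : ∀ t ∈ Set.Ioc (0:ℝ) 1, A ≤ B + t * C) : A ≤ B := by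
  refine le_of_forall_pos_le_add fun ε hε => ?_
  set t := min 1 (ε / (C + 1)) with ht
  have htpos : 0 < t := lt_min one_pos (by positivity)
  have ht1 : t ≤ 1 := min_le_left _ _
  have h2 := h t ⟨htpos, ht1⟩
  have htC : t * C ≤ ε := by
    have h3 : t ≤ ε / (C + 1) := min_le_right _ _
    calc t * C ≤ (ε / (C + 1)) * C := by nlinarith
    _ ≤ ε := by rw [div_mul_eq_mul_div, div_le_iff₀ (by linarith)]; nlinarith
  linarith

/-- quasi-Fejér: nonneg sequence with summable increments and a null subsequence tends to 0 -/
lemma tendsto_zero_of_quasi_fejer (a e : ℕ → ℝ) (ha : ∀ k, 0 ≤ a k)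
    (he : ∀ k, 0 ≤ e k) (hrec : ∀ k, a (k + 1) ≤ a k + e k) (hsum : Summable e)
    (φ : ℕ → ℕ) (hφ : StrictMono φ)
    (hsub : Tendsto (fun i => a (φ i)) atTop (𝓝 0)) :
    Tendsto a atTop (𝓝 0) := by
  have hchain : ∀ m k, m ≤ k → a k ≤ a m + ∑ i ∈ Finset.Ico m k, e i := by
    intro m k hmk
    induction k with
    | zero => simpa using (Nat.le_zero.1 hmk) ▸ (by simp)
    | succ k ih =>
      rcases Nat.lt_or_ge m (k+1) with h | h
      · have hmk' : m ≤ k := Nat.lt_succ_iff.1 h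
        have := ih hmk'
        have h2 := hrec k
        rw [Finset.sum_Ico_succ_top hmk']
        linarith
      · have : m = k + 1 := le_antisymm hmk h
        subst this; simp
  rw [Metric.tendsto_atTop]
  intro ε hε
  -- tail sums small
  have hcauchy : CauchySeq (fun n => ∑ i ∈ Finset.range n, e i) :=
    hsum.hasSum.tendsto_sum_nat.cauchySeq
  rw [Metric.cauchySeq_iff] at hcauchy
  obtain ⟨M, hM⟩ := hcauchy (ε/2) (by linarith)
  -- subsequence index
  rw [Metric.tendsto_atTop] at hsub
  obtain ⟨I, hI⟩ := hsub (ε/2) (by linarith)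
  set i₀ := max I M with hi₀
  set m := φ i₀ with hm
  have hmM : M ≤ m := le_trans (le_max_right I M) (le_trans (hφ.id_le i₀) le_rfl)
  refine ⟨m, fun k hk => ?_⟩
  have h1 : a k ≤ a m + ∑ i ∈ Finset.Ico m k, e i := hchain m k hk
  have h2 : a m < ε/2 := by
    have := hI i₀ (le_max_left I M)
    rwa [Real.dist_eq, sub_zero, abs_of_nonneg (ha _)] at this
  have h3 : ∑ i ∈ Finset.Ico m k, e i < ε/2 := by
    have habs := hM k (le_trans hmM hk) m hmM
    rw [Real.dist_eq] at habs
    have hsumeq : ∑ i ∈ Finset.Ico m k, e i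
        = ∑ i ∈ Finset.range k, e i - ∑ i ∈ Finset.range m, e i :=
      Finset.sum_Ico_eq_sub _ hk
    rw [hsumeq]
    calc ∑ i ∈ Finset.range k, e i - ∑ i ∈ Finset.range m, e i
        ≤ |∑ i ∈ Finset.range k, e i - ∑ i ∈ Finset.range m, e i| := le_abs_self _
    _ < ε/2 := habs
  rw [Real.dist_eq, sub_zero, abs_of_nonneg (ha k)]
  linarith

set_option maxHeartbeats 1000000 in
/-- Cyclic splitting proximal point algorithm for Lipschitz convex components:
the sequence `(x j)` converges to a minimizer of `f = ∑ₙ fₙ`. -/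
theorem cyclic_splitting_ppa_lipschitz_converges
    {H : Type*} [MetricSpace H] [CompleteSpace H] [LocallyCompactSpace H]
    (G : Hadamard H)
    (N : ℕ) (hN : 1 ≤ N)
    (fs : ℕ → H → ℝ)
    (hfs_conv : ∀ n ∈ Finset.Icc 1 N, GeoConvexReal G (fs n))
    (L : ℝ) (hL : 0 < L)
    (hfs_lip : ∀ n ∈ Finset.Icc 1 N, ∀ x y : H, |fs n x - fs n y| ≤ L * dist x y)
    (hmin_ne : ∃ z : H, ∀ y : H,
      (∑ n ∈ Finset.Icc 1 N, fs n z) ≤ ∑ n ∈ Finset.Icc 1 N, fs n y)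
    (lam : ℕ → ℝ) (hlam_pos : ∀ k, 0 < lam k)
    (hlam_div : ¬ Summable lam) (hlam_sq : Summable fun k => lam k ^ 2)
    (x : ℕ → H)
    (hstep : ∀ k : ℕ, ∀ n ∈ Finset.Icc 1 N, ∀ z : H,
      fs n (x (k * N + n))
          + 1 / (2 * lam k) * dist (x (k * N + n - 1)) (x (k * N + n)) ^ 2
        ≤ fs n z + 1 / (2 * lam k) * dist (x (k * N + n - 1)) z ^ 2) :
    ∃ z : H,
      (∀ y : H, (∑ n ∈ Finset.Icc 1 N, fs n z) ≤ ∑ n ∈ Finset.Icc 1 N, fs n y) ∧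
        Tendsto x atTop (𝓝 z) := by
  -- the key proximal inequality
  have key : ∀ k : ℕ, ∀ n ∈ Finset.Icc 1 N, ∀ z : H,
      2 * lam k * (fs n (x (k * N + n)) - fs n z)
          + dist (x (k * N + n - 1)) (x (k * N + n)) ^ 2
          + dist (x (k * N + n)) z ^ 2
        ≤ dist (x (k * N + n - 1)) z ^ 2 := by
    intro k n hn z
    set p := x (k * N + n) with hp
    set w := x (k * N + n - 1) with hw
    set lk := lam k with hlk
    have hlkpos : 0 < lk := hlam_pos k
    set c := 1 / (2 * lk) with hc
    have hcpos : 0 < c := by rw [hc]; positivity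
    have main : fs n p + c * dist w p ^ 2 + c * dist p z ^ 2
        ≤ fs n z + c * dist w z ^ 2 := by
      refine le_of_forall_Ioc (C := c * dist p z ^ 2) (by positivity) ?_
      intro t ht
      obtain ⟨ht0, ht1⟩ := ht
      have htm : t ∈ Set.Icc (0:ℝ) 1 := ⟨ht0.le, ht1⟩
      have h1 := hstep k n hn (G.geo p z t)
      have h2 := hfs_conv n hn p z t htm
      have h3 := G.cat0 w p z t htm
      have h3' := mul_le_mul_of_nonneg_left h3 hcpos.le
      rw [← hp, ← hw, ← hlk, ← hc] at h1
      have hmul : t * (fs n p + c * dist w p ^ 2 + c * dist p z ^ 2)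
          ≤ t * ((fs n z + c * dist w z ^ 2) + t * (c * dist p z ^ 2)) := by
        nlinarith [h1, h2, h3']
      have := le_of_mul_le_mul_left (by linarith [hmul] : t * (fs n p + c * dist w p ^ 2 + c * dist p z ^ 2) ≤ t * ((fs n z + c * dist w z ^ 2) + t * (c * dist p z ^ 2))) ht0
      linarith
    have hcl : 2 * lk * c = 1 := by rw [hc]; exact mul_one_div_cancel (by positivity)
    nlinarith [mul_le_mul_of_nonneg_left main (by positivity : (0:ℝ) ≤ 2 * lk)]
  -- step size bound
  have hstepd : ∀ k : ℕ, ∀ n ∈ Finset.Icc 1 N,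
      dist (x (k * N + n - 1)) (x (k * N + n)) ≤ lam k * L := by
    intro k n hn
    have h1 := key k n hn (x (k * N + n - 1))
    have h2 := hfs_lip n hn (x (k * N + n - 1)) (x (k * N + n))
    have h3 : fs n (x (k * N + n - 1)) - fs n (x (k * N + n))
        ≤ L * dist (x (k * N + n - 1)) (x (k * N + n)) :=
      le_trans (le_abs_self _) h2
    have hd0 : (0:ℝ) ≤ dist (x (k * N + n - 1)) (x (k * N + n)) := dist_nonneg
    set d := dist (x (k * N + n - 1)) (x (k * N + n)) with hd
    rw [dist_comm] at h1
    -- 2 d^2 ≤ 2 lam k * (fs n w - fs n p) ≤ 2 lam k * L * d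
    have h4 : 2 * d ^ 2 ≤ 2 * lam k * (L * d) := by
      simp only [dist_self] at h1
      nlinarith [hlam_pos k]
    rcases eq_or_lt_of_le hd0 with h | h
    · rw [← h]; exact mul_nonneg (hlam_pos k).le hL.le
    · nlinarith [hlam_pos k]
  -- chain bound within a cycle
  have hchaind : ∀ k : ℕ, ∀ n : ℕ, n ≤ N →
      dist (x (k * N)) (x (k * N + n)) ≤ n * (lam k * L) := by
    intro k n
    induction n with
    | zero => intro _; simp
    | succ n ih =>
      intro hn1
      have hn' : n ≤ N := le_trans (Nat.le_succ n) hn1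
      have h1 := ih hn'
      have hmem : n + 1 ∈ Finset.Icc 1 N := Finset.mem_Icc.2 ⟨Nat.succ_le_succ (Nat.zero_le n), hn1⟩
      have h2 := hstepd k (n + 1) hmem
      have hidx : k * N + (n + 1) - 1 = k * N + n := by omega
      rw [hidx] at h2
      calc dist (x (k * N)) (x (k * N + (n + 1)))
          ≤ dist (x (k * N)) (x (k * N + n)) + dist (x (k * N + n)) (x (k * N + (n + 1))) :=
            dist_triangle _ _ _
        _ ≤ n * (lam k * L) + lam k * L := by push_cast; linarith
        _ = (n + 1 : ℕ) * (lam k * L) := by push_cast; ring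
  set f : H → ℝ := fun y => ∑ n ∈ Finset.Icc 1 N, fs n y with hf
  set C : ℝ := 2 * L ^ 2 * N ^ 2 with hC
  have hCpos : 0 < C := by rw [hC]; positivity
  -- one cycle inequality
  have hcycle : ∀ (k : ℕ) (z : H),
      dist (x ((k + 1) * N)) z ^ 2
        ≤ dist (x (k * N)) z ^ 2 + 2 * lam k * (f z - f (x (k * N))) + C * lam k ^ 2 := by
    intro k z
    -- intermediate induction
    have hint : ∀ n : ℕ, n ≤ N →
        dist (x (k * N + n)) z ^ 2
          ≤ dist (x (k * N)) z ^ 2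
            + 2 * lam k * (∑ m ∈ Finset.Icc 1 n, (fs m z - fs m (x (k * N))))
            + (2 * lam k ^ 2 * L ^ 2 * N) * n := by
      intro n
      induction n with
      | zero => intro _; simp
      | succ n ih =>
        intro hn1
        have hn' : n ≤ N := le_trans (Nat.le_succ n) hn1
        have ih' := ih hn'
        have hmem : (n + 1) ∈ Finset.Icc 1 N :=
          Finset.mem_Icc.2 ⟨Nat.succ_le_succ (Nat.zero_le n), hn1⟩
        have hkey := key k (n + 1) hmem z
        have hidx : k * N + (n + 1) - 1 = k * N + n := by omega
        rw [hidx] at hkey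
        -- Lipschitz displacement bound for fs (n+1)
        have hlip := hfs_lip (n + 1) hmem (x (k * N)) (x (k * N + (n + 1)))
        have hdisp := hchaind k (n + 1) hn1
        have hfl : fs (n + 1) (x (k * N)) - fs (n + 1) (x (k * N + (n + 1)))
            ≤ L * ((n + 1 : ℕ) * (lam k * L)) := by
          calc fs (n + 1) (x (k * N)) - fs (n + 1) (x (k * N + (n + 1)))
              ≤ |fs (n + 1) (x (k * N)) - fs (n + 1) (x (k * N + (n + 1)))| := le_abs_self _
            _ ≤ L * dist (x (k * N)) (x (k * N + (n + 1))) := hlip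
            _ ≤ L * ((n + 1 : ℕ) * (lam k * L)) :=
                mul_le_mul_of_nonneg_left hdisp hL.le
        have hn1R : ((n : ℝ) + 1) ≤ (N : ℝ) := by exact_mod_cast hn1
        have hsum : ∑ m ∈ Finset.Icc 1 (n + 1), (fs m z - fs m (x (k * N)))
            = (∑ m ∈ Finset.Icc 1 n, (fs m z - fs m (x (k * N))))
              + (fs (n + 1) z - fs (n + 1) (x (k * N))) := by
          rw [← Finset.Ico_add_one_right_eq_Icc, Finset.sum_Ico_succ_top (by omega), Finset.Ico_add_one_right_eq_Icc]
        rw [hsum]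
        have hlk := hlam_pos k
        have hdwz : 0 ≤ dist (x (k * N + n)) z ^ 2 := by positivity
        push_cast at hfl ⊢
        nlinarith [hkey, ih', sq_nonneg (dist (x (k * N + n)) (x (k * N + (n + 1)))),
          mul_le_mul_of_nonneg_left hfl (by linarith : (0:ℝ) ≤ 2 * lam k),
          mul_le_mul_of_nonneg_right hn1R (by positivity : (0:ℝ) ≤ 2 * lam k ^ 2 * L ^ 2)]
    have hfin := hint N le_rfl
    have hNidx : k * N + N = (k + 1) * N := by ring
    rw [hNidx] at hfin
    have hfz : ∑ m ∈ Finset.Icc 1 N, (fs m z - fs m (x (k * N))) = f z - f (x (k * N)) := by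
      rw [hf, Finset.sum_sub_distrib]
    rw [hfz] at hfin
    have hNR : (1:ℝ) ≤ (N : ℝ) := by exact_mod_cast hN
    calc dist (x ((k+1) * N)) z ^ 2
        ≤ dist (x (k * N)) z ^ 2 + 2 * lam k * (f z - f (x (k * N)))
          + (2 * lam k ^ 2 * L ^ 2 * N) * N := hfin
      _ = dist (x (k * N)) z ^ 2 + 2 * lam k * (f z - f (x (k * N))) + C * lam k ^ 2 := by
          rw [hC]; ring
  obtain ⟨zs, hzs⟩ := hmin_ne
  have hzs' : ∀ y, f zs ≤ f y := hzs
  set dl : ℕ → ℝ := fun k => f (x (k * N)) - f zs with hdl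
  have hdl0 : ∀ k, 0 ≤ dl k := fun k => by simp only [hdl]; linarith [hzs' (x (k * N))]
  set e : ℕ → ℝ := fun k => 2 * lam k * dl k with he'
  have he0 : ∀ k, 0 ≤ e k := fun k =>
    mul_nonneg (by linarith [hlam_pos k]) (hdl0 k)
  set A : ℕ → ℝ := fun k => dist (x (k * N)) zs ^ 2 with hA
  have hA0 : ∀ k, 0 ≤ A k := fun k => by positivity
  have hrecA : ∀ k, A (k + 1) + e k ≤ A k + C * lam k ^ 2 := by
    intro k
    have := hcycle k zs
    simp only [hA, he', hdl]
    nlinarith [this]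
  set S : ℝ := ∑' k, lam k ^ 2 with hS
  have hSk : ∀ K, ∑ k ∈ Finset.range K, lam k ^ 2 ≤ S :=
    fun K => hlam_sq.sum_le_tsum (Finset.range K) (fun i _ => sq_nonneg _)
  -- cumulative bound
  have hcum : ∀ K : ℕ, A K + ∑ k ∈ Finset.range K, e k
      ≤ A 0 + C * ∑ k ∈ Finset.range K, lam k ^ 2 := by
    intro K
    induction K with
    | zero => simp
    | succ K ih =>
      rw [Finset.sum_range_succ, Finset.sum_range_succ]
      have := hrecA K
      nlinarith
  have hbound : ∀ K : ℕ, ∑ k ∈ Finset.range K, e k ≤ A 0 + C * S := by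
    intro K
    have h1 := hcum K
    have h2 := hSk K
    nlinarith [hA0 K]
  have hesum : Summable e := summable_of_sum_range_le he0 hbound
  have hAbound : ∀ K, A K ≤ A 0 + C * S := by
    intro K
    have h1 := hcum K
    have h2 := hSk K
    have h3 : 0 ≤ ∑ k ∈ Finset.range K, e k := Finset.sum_nonneg (fun i _ => he0 i)
    nlinarith
  -- frequently small gap
  have hfreq : ∀ ε : ℝ, 0 < ε → ∃ᶠ k in atTop, dl k < ε := by
    intro ε hε
    by_contra hcon
    rw [Filter.not_frequently] at hcon
    rw [Filter.eventually_atTop] at hcon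
    obtain ⟨K, hK⟩ := hcon
    have hK' : ∀ k ≥ K, ε ≤ dl k := fun k hk => not_lt.1 (hK k hk)
    have hle : ∀ k : ℕ, lam (k + K) ≤ (1 / (2 * ε)) * e (k + K) := by
      intro k
      have h1 := hK' (k + K) (Nat.le_add_left K k)
      have h2 := hlam_pos (k + K)
      simp only [he']
      rw [div_mul_eq_mul_div, one_mul, le_div_iff₀ (by linarith)]
      nlinarith
    have hsum2 : Summable (fun k => (1 / (2 * ε)) * e (k + K)) :=
      ((summable_nat_add_iff K).2 hesum).mul_left _
    have : Summable (fun k => lam (k + K)) :=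
      Summable.of_nonneg_of_le (fun k => (hlam_pos _).le) hle hsum2
    exact hlam_div ((summable_nat_add_iff K).1 this)
  -- extract a subsequence along which dl → 0
  obtain ⟨φ, hφmono, hφ⟩ := Filter.extraction_forall_of_frequently
    (P := fun n k => dl k < 1 / (n + 1)) (fun n => hfreq _ (by positivity))
  have hdlφ : Tendsto (fun n => dl (φ n)) atTop (𝓝 0) := by
    refine squeeze_zero (fun n => hdl0 _) (fun n => (hφ n).le) ?_
    exact tendsto_one_div_add_atTop_nhds_zero_nat
  -- boundedness: the anchor points lie in a fixed closed ball
  set R : ℝ := Real.sqrt (A 0 + C * S) with hR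
  have hball : ∀ i : ℕ, x (φ i * N) ∈ Metric.closedBall zs R := by
    intro i
    rw [Metric.mem_closedBall]
    have h1 : A (φ i) ≤ A 0 + C * S := hAbound (φ i)
    have h2 : dist (x (φ i * N)) zs ^ 2 ≤ A 0 + C * S := h1
    have h3 : (0:ℝ) ≤ A 0 + C * S := le_trans (by positivity) h2
    calc dist (x (φ i * N)) zs = Real.sqrt (dist (x (φ i * N)) zs ^ 2) :=
          (Real.sqrt_sq dist_nonneg).symm
      _ ≤ R := by rw [hR]; exact Real.sqrt_le_sqrt h2
  obtain ⟨z, hzball, ψ, hψmono, hψtend⟩ :=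
    (G.isCompact_closedBall zs R).tendsto_subseq hball
  have hψtend' : Tendsto (fun i => x (φ (ψ i) * N)) atTop (𝓝 z) := hψtend
  -- continuity of f
  have hcont : Continuous f := by
    rw [hf]
    apply continuous_finset_sum
    intro n hn
    have hlip : LipschitzWith (Real.toNNReal L) (fs n) :=
      LipschitzWith.of_dist_le_mul (fun a b => by
        rw [Real.dist_eq, Real.coe_toNNReal _ hL.le]; exact hfs_lip n hn a b)
    exact hlip.continuous
  -- z is a minimizer
  have hfz : f z = f zs := by
    have h1 : Tendsto (fun i => dl (φ (ψ i))) atTop (𝓝 0) :=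
      hdlφ.comp hψmono.tendsto_atTop
    have h2 : Tendsto (fun i => f (x (φ (ψ i) * N))) atTop (𝓝 (f z)) :=
      (hcont.tendsto z).comp hψtend'
    have h3 : Tendsto (fun i => dl (φ (ψ i))) atTop (𝓝 (f z - f zs)) := by
      simp only [hdl]
      exact h2.sub tendsto_const_nhds
    have h4 := tendsto_nhds_unique h3 h1
    linarith
  have hzmin : ∀ y, f z ≤ f y := fun y => by rw [hfz]; exact hzs' y
  -- quasi-Fejér convergence of the anchor points to z
  set a : ℕ → ℝ := fun k => dist (x (k * N)) z ^ 2 with ha'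
  have hreca : ∀ k, a (k + 1) ≤ a k + C * lam k ^ 2 := by
    intro k
    have h1 := hcycle k z
    have h0 : f z - f (x (k * N)) ≤ 0 := by linarith [hzmin (x (k * N))]
    have hlk := hlam_pos k
    have h5 : 2 * lam k * (f z - f (x (k * N))) ≤ 0 :=
      mul_nonpos_of_nonneg_of_nonpos (by linarith) h0
    simp only [ha']
    linarith
  have hsubz : Tendsto (fun i => a ((φ ∘ ψ) i)) atTop (𝓝 0) := by
    have hd : Tendsto (fun i => dist (x (φ (ψ i) * N)) z) atTop (𝓝 0) := by
      have := hψtend'.dist (tendsto_const_nhds (x := z))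
      simpa using this
    have := hd.mul hd
    simp only [mul_zero] at this
    refine this.congr (fun i => ?_)
    simp [a, Function.comp, sq]
  have hAz : Tendsto a atTop (𝓝 0) :=
    tendsto_zero_of_quasi_fejer a (fun k => C * lam k ^ 2)
      (fun k => by positivity) (fun k => by positivity) hreca
      (hlam_sq.mul_left C) (φ ∘ ψ) (hφmono.comp hψmono) hsubz
  have hdist0 : Tendsto (fun k => dist (x (k * N)) z) atTop (𝓝 0) := by
    have := (Real.continuous_sqrt.tendsto 0).comp hAz
    simp only [Function.comp, Real.sqrt_zero] at this
    refine this.congr (fun k => ?_)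
    simp [a, Real.sqrt_sq dist_nonneg]
  -- lam → 0
  have hlam0 : Tendsto lam atTop (𝓝 0) := by
    have h1 : Tendsto (fun k => lam k ^ 2) atTop (𝓝 0) := hlam_sq.tendsto_atTop_zero
    have := (Real.continuous_sqrt.tendsto 0).comp h1
    simp only [Function.comp, Real.sqrt_zero] at this
    refine this.congr (fun k => ?_)
    simp [Real.sqrt_sq (hlam_pos k).le]
  -- from anchor points to the whole sequence
  have hjb : ∀ j : ℕ, dist (x j) z ≤ dist (x (j / N * N)) z + N * (lam (j / N) * L) := by
    intro j
    have hmod : j / N * N + j % N = j := Nat.div_add_mod' j N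
    have h1 := hchaind (j / N) (j % N) (le_of_lt (Nat.mod_lt j (by omega)))
    rw [hmod] at h1
    have h2 : (↑(j % N) : ℝ) ≤ (N : ℝ) := by
      exact_mod_cast (Nat.mod_lt j (show 0 < N by omega)).le
    have h3 : dist (x (j / N * N)) (x j) ≤ (N:ℝ) * (lam (j / N) * L) := by
      refine le_trans h1 ?_
      exact mul_le_mul_of_nonneg_right h2 (mul_nonneg (hlam_pos _).le hL.le)
    calc dist (x j) z ≤ dist (x j) (x (j / N * N)) + dist (x (j / N * N)) z :=
          dist_triangle _ _ _
      _ ≤ (N:ℝ) * (lam (j / N) * L) + dist (x (j / N * N)) z := by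
          rw [dist_comm (x j)]; linarith
      _ = dist (x (j / N * N)) z + N * (lam (j / N) * L) := by ring
  have hdivN : Tendsto (fun j : ℕ => j / N) atTop atTop := by
    apply tendsto_atTop_atTop.2
    intro b
    exact ⟨b * N, fun j hj => (Nat.le_div_iff_mul_le (by omega)).2 hj⟩
  have hg : Tendsto (fun k => dist (x (k * N)) z + (N:ℝ) * (lam k * L)) atTop (𝓝 0) := by
    have h2 : Tendsto (fun k => (N:ℝ) * (lam k * L)) atTop (𝓝 0) := by
      have := (hlam0.mul_const L).const_mul (N:ℝ)
      simpa using this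
    simpa using hdist0.add h2
  have hfinal : Tendsto (fun j => dist (x j) z) atTop (𝓝 0) :=
    squeeze_zero (fun j => dist_nonneg) hjb (hg.comp hdivN)
  exact ⟨z, hzmin, tendsto_iff_dist_tendsto_zero.2 hfinal⟩
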